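/- Let A : E → E be the symmetric endomorphism of a real inner product space E = H ⊕ V (orthogonal direct sum) given by A(Y + V) = ⟨Y,X₀⟩(βX₀ + λe) + ⟨V,e⟩(λX₀ + γe), where X₀ ∈ H, e ∈ V are unit vectors and β, λ, γ ∈ ℝ satisfy λ ≠ 0 and βγ − λ² = 0. Then, setting E₀ = (βX₀ + λe)/‖βX₀ + λe‖, one has A(w) = (β + γ)⟨w, E₀⟩E₀ for all w ∈ E, and β + γ ≠ 0. -/

import Mathlib

open scoped RealInnerProductSpace

/-- Formula (3.21): for type B₁ (`βγ − λ² = 0`, `λ ≠ 0`) the shape operator is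
`(β+γ)` times the orthogonal projection onto the line spanned by
`E₀ = (βX₀ + λe)/‖βX₀ + λe‖`, and `β + γ ≠ 0`. -/
theorem stmt_3 {E : Type*} [NormedAddCommGroup E] [InnerProductSpace ℝ E]
    (H V : Submodule ℝ E)
    (horth : ∀ x ∈ H, ∀ v ∈ V, ⟪x, v⟫ = 0)
    (hsup : H ⊔ V = ⊤)
    (X₀ : E) (hX₀ : X₀ ∈ H) (hX₀n : ‖X₀‖ = 1)
    (e : E) (he : e ∈ V) (hen : ‖e‖ = 1)
    (β lam γ : ℝ) (hlam : lam ≠ 0) (hB1 : β * γ - lam ^ 2 = 0)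
    (A : E →ₗ[ℝ] E)
    (hAH : ∀ Y ∈ H, A Y = ⟪Y, X₀⟫ • (β • X₀ + lam • e))
    (hAV : ∀ v ∈ V, A v = ⟪v, e⟫ • (lam • X₀ + γ • e)) :
    β + γ ≠ 0 ∧ ∀ w : E,
      A w = ((β + γ) *
          ⟪w, ‖β • X₀ + lam • e‖⁻¹ • (β • X₀ + lam • e)⟫) •
        (‖β • X₀ + lam • e‖⁻¹ • (β • X₀ + lam • e)) := by
  have hlam2 : lam ^ 2 > 0 := by positivity
  have hβ : β ≠ 0 := by
    intro h; rw [h] at hB1; nlinarith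
  have hβγ : β + γ ≠ 0 := by
    intro h
    have hγ : γ = -β := by linarith
    rw [hγ] at hB1
    nlinarith [sq_nonneg β]
  have hXe : ⟪X₀, e⟫ = 0 := horth X₀ hX₀ e he
  have heX : ⟪e, X₀⟫ = 0 := by rw [real_inner_comm]; exact hXe
  have hXX : ⟪X₀, X₀⟫ = 1 := by
    rw [real_inner_self_eq_norm_sq, hX₀n]; norm_num
  have hee : ⟪e, e⟫ = 1 := by
    rw [real_inner_self_eq_norm_sq, hen]; norm_num
  set u : E := β • X₀ + lam • e with hu
  have hu2 : ‖u‖ ^ 2 = β * (β + γ) := by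
    rw [← real_inner_self_eq_norm_sq]
    simp only [hu, inner_add_left, inner_add_right, real_inner_smul_left,
      real_inner_smul_right, hXe, heX, hXX, hee]
    nlinarith
  have hn : ‖u‖ ≠ 0 := by
    intro h
    rw [h] at hu2
    norm_num at hu2
    rcases hu2 with h' | h'
    exacts [hβ h', hβγ h']
  refine ⟨hβγ, fun w => ?_⟩
  obtain ⟨y, hy, v, hv, hw⟩ := Submodule.mem_sup.mp
    (by rw [hsup]; trivial : w ∈ H ⊔ V)
  subst hw
  have hvX : ⟪v, X₀⟫ = 0 := by rw [real_inner_comm]; exact horth X₀ hX₀ v hv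
  have hye : ⟪y, e⟫ = 0 := horth y hy e he
  have hAw : A (y + v) = ⟪y, X₀⟫ • u + ⟪v, e⟫ • (lam • X₀ + γ • e) := by
    rw [map_add, hAH y hy, hAV v hv]
  set a := ⟪y, X₀⟫
  set b := ⟪v, e⟫
  have hinner : ⟪y + v, ‖u‖⁻¹ • u⟫ = ‖u‖⁻¹ * (β * a + lam * b) := by
    simp only [hu, real_inner_smul_right, inner_add_left, inner_add_right,
      real_inner_smul_right, hvX, hye, hXe, heX, hXX, hee, a, b]
    ring_nf
  rw [hAw, hinner, smul_smul]
  have hc : (β + γ) * (‖u‖⁻¹ * (β * a + lam * b)) * ‖u‖⁻¹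
      = (β * a + lam * b) / β := by
    have h2 : ‖u‖⁻¹ * ‖u‖⁻¹ = (β * (β + γ))⁻¹ := by
      rw [← mul_inv, ← hu2]; ring_nf
    rw [show (β + γ) * (‖u‖⁻¹ * (β * a + lam * b)) * ‖u‖⁻¹
        = (β + γ) * (β * a + lam * b) * (‖u‖⁻¹ * ‖u‖⁻¹) from by ring, h2]
    field_simp
  rw [hc]
  rw [hu]
  match_scalars
  · field_simp
  · field_simp
    linear_combination b * hB1
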